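/- For μ ≠ 0, the rational function ω(z) = (1/2)(3/z - 2/(z+1)) does not satisfy the differential equation ω'' + 3ωω' + ω³ - 4rω - 2r' = 0, where r(z) = 3/(4(z+1)²) + 1/(64μ²z³) + (3μ-1)/(4μ(z+1)) + (3-4μ-6μ²)/(32μ²z²) + (1+16μ-48μ²)/(64μ²z); indeed, substituting ω yields (after clearing denominators) the polynomial z² - 1 + (2 - 8z + 2z²)μ, which is not identically zero. -/

import Mathlib

/-- r(z), the reduced invariant of the Kovacic algorithm. -/
noncomputable def rCoeff (μ : ℂ) : ℂ → ℂ := fun z =>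
  3 / (4 * (z + 1) ^ 2) + 1 / (64 * μ ^ 2 * z ^ 3)
    + (3 * μ - 1) / (4 * μ * (z + 1))
    + (3 - 4 * μ - 6 * μ ^ 2) / (32 * μ ^ 2 * z ^ 2)
    + (1 + 16 * μ - 48 * μ ^ 2) / (64 * μ ^ 2 * z)

/-- ω(z) = (1/2)(3/z - 2/(z+1)), the Kovacic candidate. -/
noncomputable def ωCoeff : ℂ → ℂ := fun z => (1/2) * (3 / z - 2 / (z + 1))

/-- Derivative of ω away from the poles. -/
lemma hasDerivAt_ωCoeff (z : ℂ) (hz : z ≠ 0) (hz1 : z + 1 ≠ 0) :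
    HasDerivAt ωCoeff (-3 / (2 * z ^ 2) + 1 / ((z + 1) ^ 2)) z := by
  have h3 : HasDerivAt (fun z : ℂ => 3 / z) ((0 * z - 3 * 1) / z ^ 2) z :=
    (hasDerivAt_const z 3).div (hasDerivAt_id z) hz
  have h2 : HasDerivAt (fun z : ℂ => 2 / (z + 1)) ((0 * (z + 1) - 2 * 1) / (z + 1) ^ 2) z :=
    (hasDerivAt_const z 2).div ((hasDerivAt_id z).add_const 1) hz1
  have := ((h3.sub h2).const_mul (1/2 : ℂ))
  exact this.congr_deriv (by ring)

/-- Second derivative form of ω. -/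
noncomputable def ω₁ : ℂ → ℂ := fun z => -3 / (2 * z ^ 2) + 1 / ((z + 1) ^ 2)

lemma hasDerivAt_ω₁ : HasDerivAt ω₁ (11 / 4) 1 := by
  have h1 : HasDerivAt (fun z : ℂ => -3 / (2 * z ^ 2))
      ((0 * (2 * 1 ^ 2) - -3 * (2 * (2 * 1 ^ 1 * 1))) / (2 * 1 ^ 2) ^ 2) 1 :=
    (hasDerivAt_const 1 (-3)).div (((hasDerivAt_id 1).pow 2).const_mul 2) (by norm_num)
  have h2 : HasDerivAt (fun z : ℂ => 1 / ((z + 1) ^ 2))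
      ((0 * ((1 + 1) ^ 2) - 1 * (2 * (1 + 1) ^ 1 * 1)) / ((1 + 1) ^ 2) ^ 2) 1 :=
    (hasDerivAt_const 1 1).div (((hasDerivAt_id 1).add_const 1).pow 2) (by norm_num)
  have := h1.add h2
  exact this.congr_deriv (by norm_num)

lemma hasDerivAt_rCoeff (μ : ℂ) (hμ : μ ≠ 0) :
    HasDerivAt (rCoeff μ)
      ((0 * (4 * (1 + 1) ^ 2) - 3 * (4 * (2 * (1 + 1) ^ 1 * 1))) / (4 * (1 + 1) ^ 2) ^ 2 +
        (0 * (64 * μ ^ 2 * 1 ^ 3) - 1 * (64 * μ ^ 2 * (3 * 1 ^ 2 * 1))) / (64 * μ ^ 2 * 1 ^ 3) ^ 2 +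
        (0 * (4 * μ * (1 + 1)) - (3 * μ - 1) * (4 * μ * 1)) / (4 * μ * (1 + 1)) ^ 2 +
        (0 * (32 * μ ^ 2 * 1 ^ 2) - (3 - 4 * μ - 6 * μ ^ 2) * (32 * μ ^ 2 * (2 * 1 ^ 1 * 1))) /
          (32 * μ ^ 2 * 1 ^ 2) ^ 2 +
        (0 * (64 * μ ^ 2 * 1) - (1 + 16 * μ - 48 * μ ^ 2) * (64 * μ ^ 2 * 1)) /
          (64 * μ ^ 2 * 1) ^ 2) 1 := by
  have hμ2 : μ ^ 2 ≠ 0 := pow_ne_zero 2 hμ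
  have t1 : HasDerivAt (fun z : ℂ => 3 / (4 * (z + 1) ^ 2))
      ((0 * (4 * (1 + 1) ^ 2) - 3 * (4 * (2 * (1 + 1) ^ 1 * 1))) / (4 * (1 + 1) ^ 2) ^ 2) 1 :=
    (hasDerivAt_const 1 3).div ((((hasDerivAt_id 1).add_const 1).pow 2).const_mul 4)
      (by norm_num)
  have t2 : HasDerivAt (fun z : ℂ => 1 / (64 * μ ^ 2 * z ^ 3))
      ((0 * (64 * μ ^ 2 * 1 ^ 3) - 1 * (64 * μ ^ 2 * (3 * 1 ^ 2 * 1))) / (64 * μ ^ 2 * 1 ^ 3) ^ 2) 1 :=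
    (hasDerivAt_const 1 1).div (((hasDerivAt_id 1).pow 3).const_mul (64 * μ ^ 2))
      (by simp [hμ2])
  have t3 : HasDerivAt (fun z : ℂ => (3 * μ - 1) / (4 * μ * (z + 1)))
      ((0 * (4 * μ * (1 + 1)) - (3 * μ - 1) * (4 * μ * 1)) / (4 * μ * (1 + 1)) ^ 2) 1 :=
    (hasDerivAt_const 1 (3 * μ - 1)).div (((hasDerivAt_id 1).add_const 1).const_mul (4 * μ))
      (by simp [hμ])
  have t4 : HasDerivAt (fun z : ℂ => (3 - 4 * μ - 6 * μ ^ 2) / (32 * μ ^ 2 * z ^ 2))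
      ((0 * (32 * μ ^ 2 * 1 ^ 2) - (3 - 4 * μ - 6 * μ ^ 2) * (32 * μ ^ 2 * (2 * 1 ^ 1 * 1)))
        / (32 * μ ^ 2 * 1 ^ 2) ^ 2) 1 :=
    (hasDerivAt_const 1 (3 - 4 * μ - 6 * μ ^ 2)).div
      (((hasDerivAt_id 1).pow 2).const_mul (32 * μ ^ 2)) (by simp [hμ2])
  have t5 : HasDerivAt (fun z : ℂ => (1 + 16 * μ - 48 * μ ^ 2) / (64 * μ ^ 2 * z))
      ((0 * (64 * μ ^ 2 * 1) - (1 + 16 * μ - 48 * μ ^ 2) * (64 * μ ^ 2 * 1))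
        / (64 * μ ^ 2 * 1) ^ 2) 1 :=
    (hasDerivAt_const 1 (1 + 16 * μ - 48 * μ ^ 2)).div
      ((hasDerivAt_id 1).const_mul (64 * μ ^ 2)) (by simp [hμ2])
  exact (((t1.add t2).add t3).add t4).add t5

/-- Key step of Kovacic's algorithm: for μ ≠ 0 the candidate ω does not satisfy
ω'' + 3ωω' + ω³ - 4rω - 2r' = 0; indeed, the obstruction polynomial
z² - 1 + (2 - 8z + 2z²)μ is not identically zero. -/
theorem Kovacic_obstruction (μ : ℂ) (hμ : μ ≠ 0) :
    (¬ ∀ z : ℂ, z ≠ 0 → z + 1 ≠ 0 →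
      deriv (deriv ωCoeff) z + 3 * ωCoeff z * deriv ωCoeff z + ωCoeff z ^ 3
        - 4 * rCoeff μ z * ωCoeff z - 2 * deriv (rCoeff μ) z = 0) ∧
    ¬ ∀ z : ℂ, z ^ 2 - 1 + (2 - 8 * z + 2 * z ^ 2) * μ = 0 := by
  constructor
  · intro h
    have h1 := h 1 one_ne_zero (by norm_num)
    have hω1 : ωCoeff 1 = 1 := by norm_num [ωCoeff]
    have hωd : deriv ωCoeff 1 = -5 / 4 := by
      have := (hasDerivAt_ωCoeff 1 one_ne_zero (by norm_num)).deriv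
      rw [this]; norm_num
    have hev : deriv ωCoeff =ᶠ[nhds (1 : ℂ)] ω₁ := by
      filter_upwards [eventually_ne_nhds (show (1 : ℂ) ≠ 0 by norm_num),
        eventually_ne_nhds (show (1 : ℂ) ≠ -1 by norm_num)] with z hz hz1
      have hz1' : z + 1 ≠ 0 := fun hc => hz1 (by linear_combination hc)
      exact (hasDerivAt_ωCoeff z hz hz1').deriv
    have hωdd : deriv (deriv ωCoeff) 1 = 11 / 4 := by
      rw [hev.deriv_eq, hasDerivAt_ω₁.deriv]
    have d1 : (4 * ((1:ℂ) + 1) ^ 2) ^ 2 ≠ 0 := by norm_num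
    have d2 : (64 * μ ^ 2 * (1:ℂ) ^ 3) ^ 2 ≠ 0 := by simp [hμ]
    have d3 : (4 * μ * ((1:ℂ) + 1)) ^ 2 ≠ 0 := by simp [hμ]
    have d4 : (32 * μ ^ 2 * (1:ℂ) ^ 2) ^ 2 ≠ 0 := by simp [hμ]
    have d5 : (64 * μ ^ 2 * (1:ℂ)) ^ 2 ≠ 0 := by simp [hμ]
    have hrd : deriv (rCoeff μ) 1 = (12 * μ ^ 2 + μ - 4) / (16 * μ ^ 2) := by
      rw [(hasDerivAt_rCoeff μ hμ).deriv]
      rw [div_add_div _ _ d1 d2, div_add_div _ _ (mul_ne_zero d1 d2) d3,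
        div_add_div _ _ (mul_ne_zero (mul_ne_zero d1 d2) d3) d4,
        div_add_div _ _ (mul_ne_zero (mul_ne_zero (mul_ne_zero d1 d2) d3) d4) d5,
        div_eq_div_iff
          (mul_ne_zero (mul_ne_zero (mul_ne_zero (mul_ne_zero d1 d2) d3) d4) d5)
          (by simp [hμ])]
      ring
    have e1 : (4 * ((1:ℂ) + 1) ^ 2) ≠ 0 := by norm_num
    have e2 : (64 * μ ^ 2 * (1:ℂ) ^ 3) ≠ 0 := by simp [hμ]
    have e3 : (4 * μ * ((1:ℂ) + 1)) ≠ 0 := by simp [hμ]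
    have e4 : (32 * μ ^ 2 * (1:ℂ) ^ 2) ≠ 0 := by simp [hμ]
    have e5 : (64 * μ ^ 2 * (1:ℂ)) ≠ 0 := by simp [hμ]
    have hr1 : rCoeff μ 1 = (1 - 3 * μ ^ 2) / (8 * μ ^ 2) := by
      show (3:ℂ) / (4 * (1 + 1) ^ 2) + 1 / (64 * μ ^ 2 * 1 ^ 3)
          + (3 * μ - 1) / (4 * μ * (1 + 1))
          + (3 - 4 * μ - 6 * μ ^ 2) / (32 * μ ^ 2 * 1 ^ 2)
          + (1 + 16 * μ - 48 * μ ^ 2) / (64 * μ ^ 2 * 1) = _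
      rw [div_add_div _ _ e1 e2, div_add_div _ _ (mul_ne_zero e1 e2) e3,
        div_add_div _ _ (mul_ne_zero (mul_ne_zero e1 e2) e3) e4,
        div_add_div _ _ (mul_ne_zero (mul_ne_zero (mul_ne_zero e1 e2) e3) e4) e5,
        div_eq_div_iff
          (mul_ne_zero (mul_ne_zero (mul_ne_zero (mul_ne_zero e1 e2) e3) e4) e5)
          (by simp [hμ])]
      ring
    rw [hω1, hωd, hωdd, hr1, hrd] at h1
    have hμ3 : μ ^ 3 = 0 := by
      field_simp at h1
      linear_combination -μ ^ 2 * h1 / 64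
    exact hμ (by simpa using hμ3)
  · intro h
    have := h 1
    norm_num at this
    exact hμ this
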